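/- (Tree graph representation) Let G be a finite tree (acyclic connected graph) on vertices 1,...,n. Suppose given numbers p_i ∈ [0,1] for each vertex i and p_{ij} for each edge {i,j} of G such that for every edge {i,j}: 0 ≤ p_{ij}, p_{ij} ≤ p_i, p_{ij} ≤ p_j, and p_i + p_j − p_{ij} ≤ 1 (i.e., each pair admits a joint probability distribution on {0,1}^2 with marginals p_i, p_j and joint p_{ij}). Then there exists a probability measure μ on {0,1}^n with μ(x_i = 1) = p_i for all i and μ(x_i = 1, x_j = 1) = p_{ij} for all edges {i,j}. -/

import Mathlib

open Finset SimpleGraph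

/-- Kernel construction for one edge. -/
lemma kernel_exists (a b c : ℝ) (ha0 : 0 ≤ a) (ha1 : a ≤ 1) (hb0 : 0 ≤ b) (hb1 : b ≤ 1)
    (h0 : 0 ≤ c) (h1 : c ≤ a) (h2 : c ≤ b) (h3 : a + b - c ≤ 1) :
    ∃ k : Bool → Bool → ℝ, (∀ s s', 0 ≤ k s s') ∧ (∀ s, k s true + k s false = 1) ∧
      a * k true true = c ∧ a * k true true + (1 - a) * k false true = b := by
  refine ⟨fun s s' =>
    if s then (if a = 0 then (if s' then 0 else 1) else (if s' then c / a else (a - c) / a))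
    else (if a = 1 then (if s' then 0 else 1)
          else (if s' then (b - c) / (1 - a) else (1 - a - b + c) / (1 - a))), ?_, ?_, ?_, ?_⟩
  · intro s s'
    cases s <;> cases s' <;> simp only [if_true, if_false, Bool.false_eq_true] <;>
      split_ifs with h <;>
      first
      | exact div_nonneg (by linarith) (by linarith)
      | norm_num
  · intro s
    cases s <;> simp only [if_true, if_false, Bool.false_eq_true, ite_true, ite_false] <;>
      split_ifs with h
    · norm_num
    · have ha : (1:ℝ) - a ≠ 0 := sub_ne_zero.mpr (Ne.symm h)
      rw [← add_div, div_eq_one_iff_eq ha]; ring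
    · norm_num
    · rw [← add_div, div_eq_one_iff_eq h]; ring
  · simp only [if_true, ite_true]
    by_cases h : a = 0
    · have : c = 0 := le_antisymm (h ▸ h1) h0
      simp [h, this]
    · rw [if_neg h]
      field_simp
  · simp only [if_true, ite_true, if_false, ite_false]
    by_cases h : a = 0
    · have hc0 : c = 0 := le_antisymm (h ▸ h1) h0
      have h' : a ≠ 1 := by rw [h]; norm_num
      rw [if_pos h, if_neg h', h, hc0]
      norm_num
    · rw [if_neg h]
      by_cases h' : a = 1
      · have hbc : b = c := le_antisymm (by linarith [h' ▸ h3]) h2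
        rw [if_pos h', h', hbc]
        simp only [Bool.false_eq_true, if_false]
        ring
      · rw [if_neg h']
        have ha : (1:ℝ) - a ≠ 0 := sub_ne_zero.mpr (Ne.symm h')
        simp only [Bool.false_eq_true, if_false]
        field_simp
        try ring

lemma tree_exists_leaf {V : Type} [Fintype V] (G : SimpleGraph V) (hG : G.IsTree)
    (h2 : 2 ≤ Fintype.card V) : ∃ ℓ t : V, G.Adj ℓ t ∧ ∀ u, G.Adj ℓ u → u = t := by
  classical
  have hconn := hG.isConnected
  have hdeg1 : ∀ v : V, 1 ≤ G.degree v := by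
    intro v
    rw [Nat.one_le_iff_ne_zero, ← Nat.pos_iff_ne_zero, G.degree_pos_iff_exists_adj]
    obtain ⟨w, hw⟩ := Fintype.exists_ne_of_one_lt_card (by omega) v
    obtain ⟨walk⟩ := hconn.preconnected v w
    cases walk with
    | nil => exact absurd rfl (Ne.symm hw)
    | cons h _ => exact ⟨_, h⟩
  have hsum : ∑ v : V, G.degree v = 2 * G.edgeFinset.card :=
    G.sum_degrees_eq_twice_card_edges
  have hcard : G.edgeFinset.card + 1 = Fintype.card V := hG.card_edgeFinset
  have : ∃ ℓ : V, G.degree ℓ ≤ 1 := by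
    by_contra hc
    push_neg at hc
    have : ∑ v : V, 2 ≤ ∑ v : V, G.degree v := Finset.sum_le_sum (fun v _ => hc v)
    simp only [Finset.sum_const, Finset.card_univ, smul_eq_mul] at this
    omega
  obtain ⟨ℓ, hℓ⟩ := this
  have hdeg : G.degree ℓ = 1 := le_antisymm hℓ (hdeg1 ℓ)
  rw [SimpleGraph.degree, Finset.card_eq_one] at hdeg
  obtain ⟨t, ht⟩ := hdeg
  refine ⟨ℓ, t, ?_, ?_⟩
  · have : t ∈ G.neighborFinset ℓ := ht ▸ Finset.mem_singleton_self t
    exact (SimpleGraph.mem_neighborFinset _ _ _).mp this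
  · intro u hu
    have : u ∈ G.neighborFinset ℓ := (SimpleGraph.mem_neighborFinset _ _ _).mpr hu
    rw [ht, Finset.mem_singleton] at this
    exact this

lemma internal_two_neighbors {V : Type} {G : SimpleGraph V} {u v ℓ : V} (w : G.Walk u v)
    (hw : w.IsPath) (hℓ : ℓ ∈ w.support) (hu : ℓ ≠ u) (hv : ℓ ≠ v) :
    ∃ a b, a ≠ b ∧ G.Adj ℓ a ∧ G.Adj ℓ b := by
  induction w with
  | nil => simp only [SimpleGraph.Walk.support_nil, List.mem_singleton] at hℓ; exact absurd hℓ hu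
  | @cons x y z h w ih =>
    rw [SimpleGraph.Walk.support_cons, List.mem_cons] at hℓ
    rcases hℓ with h1 | h1
    · exact absurd h1 hu
    · by_cases hy : ℓ = y
      · subst hy
        cases w with
        | nil => exact absurd rfl hv
        | @cons _ y2 _ h2 w2 =>
          refine ⟨x, y2, ?_, h.symm, h2⟩
          intro hxy2
          subst hxy2
          have := hw.support_nodup
          rw [SimpleGraph.Walk.support_cons, SimpleGraph.Walk.support_cons] at this
          simp only [List.nodup_cons] at this
          exact this.1 (by simp [SimpleGraph.Walk.support_cons])
      · exact ih (hw.of_cons) h1 hy hv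

lemma walk_avoid {V : Type} {G : SimpleGraph V} {ℓ : V} {u v : V} (w : G.Walk u v)
    (h : ℓ ∉ w.support) (hu : u ≠ ℓ) (hv : v ≠ ℓ) :
    (G.comap (Function.Embedding.subtype fun x => x ≠ ℓ)).Reachable ⟨u, hu⟩ ⟨v, hv⟩ := by
  induction w with
  | nil => exact SimpleGraph.Reachable.refl _
  | @cons x y z hxy w ih =>
    have hy : y ≠ ℓ := by
      intro hyℓ
      exact h (by rw [SimpleGraph.Walk.support_cons]; exact List.mem_cons_of_mem _ (hyℓ ▸ w.start_mem_support))
    have h' : ℓ ∉ w.support := fun hm => h (by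
      rw [SimpleGraph.Walk.support_cons]; exact List.mem_cons_of_mem _ hm)
    have hadj : (G.comap (Function.Embedding.subtype fun x => x ≠ ℓ)).Adj ⟨x, hu⟩ ⟨y, hy⟩ := by
      simpa using hxy
    exact SimpleGraph.Reachable.trans hadj.reachable (ih h' hy hv)

lemma tree_delete_leaf {V : Type} {G : SimpleGraph V} (hG : G.IsTree)
    {ℓ t : V} (hadj : G.Adj ℓ t) (huniq : ∀ u, G.Adj ℓ u → u = t) :
    (G.comap (Function.Embedding.subtype fun u => u ≠ ℓ)).IsTree := by
  classical
  have hne : t ≠ ℓ := fun h => G.irrefl (h ▸ hadj)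
  constructor
  · have : Nonempty {u : V // u ≠ ℓ} := ⟨⟨t, hne⟩⟩
    refine SimpleGraph.Connected.mk ?_
    rintro ⟨u, hu⟩ ⟨v, hv⟩
    obtain ⟨w⟩ := hG.isConnected.preconnected u v
    set P := w.toPath with hP
    have hℓ : ℓ ∉ P.1.support := by
      intro hmem
      obtain ⟨a, b, hab, ha, hb⟩ :=
        internal_two_neighbors P.1 P.2 hmem (Ne.symm hu) (Ne.symm hv)
      exact hab ((huniq a ha).trans (huniq b hb).symm)
    exact walk_avoid P.1 hℓ hu hv
  · intro x c hc
    have := hG.IsAcyclic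
      ((c.map (SimpleGraph.Embedding.comap (Function.Embedding.subtype fun u => u ≠ ℓ) G).toHom))
    exact this (hc.map (by exact Subtype.val_injective))


section Main

theorem tree_rep_aux : ∀ (N : ℕ) (V : Type) [Fintype V] [DecidableEq V] (G : SimpleGraph V),
    Fintype.card V = N → G.IsTree →
    ∀ (p : V → ℝ) (q : V → V → ℝ),
    (∀ i, 0 ≤ p i ∧ p i ≤ 1) →
    (∀ i j, G.Adj i j → q i j = q j i) →
    (∀ i j, G.Adj i j → 0 ≤ q i j ∧ q i j ≤ p i ∧ q i j ≤ p j ∧ p i + p j - q i j ≤ 1) →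
    ∃ μ : (V → Bool) → ℝ,
      (∀ x, 0 ≤ μ x) ∧ (∑ x : V → Bool, μ x) = 1 ∧
      (∀ i, (∑ x ∈ Finset.univ.filter (fun x : V → Bool => x i = true), μ x) = p i) ∧
      (∀ i j, G.Adj i j →
        (∑ x ∈ Finset.univ.filter (fun x : V → Bool => x i = true ∧ x j = true), μ x)
          = q i j) := by
  intro N
  induction N using Nat.strong_induction_on with
  | _ N IH =>
  intro V _ _ G hcard hG p q hp hsymm hq
  have hne : Nonempty V := hG.isConnected.nonempty
  have hpos : 1 ≤ Fintype.card V := Fintype.card_pos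
  by_cases hN1 : Fintype.card V = 1
  · -- base case: single vertex
    obtain ⟨v0, hv0⟩ := Fintype.card_eq_one_iff.mp hN1
    have hsum : ∀ f : (V → Bool) → ℝ,
        ∑ x : V → Bool, f x = f (fun _ => true) + f (fun _ => false) := by
      intro f
      let e : (V → Bool) ≃ Bool :=
        ⟨fun x => x v0, fun b _ => b, fun x => funext fun v => by rw [hv0 v], fun b => rfl⟩
      rw [← Equiv.sum_comp e.symm, Fintype.sum_bool]
      rfl
    refine ⟨fun x => if x v0 then p v0 else 1 - p v0, ?_, ?_, ?_, ?_⟩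
    · intro x
      have := hp v0
      dsimp only
      split_ifs <;> linarith [this.1, this.2]
    · rw [hsum]
      norm_num
    · intro i
      rw [Finset.sum_filter, hsum]
      rw [hv0 i]
      norm_num
    · intro i j hadj
      exact absurd ((hv0 i).trans (hv0 j).symm) hadj.ne
  · -- inductive step
    have hN2 : 2 ≤ Fintype.card V := by omega
    obtain ⟨ℓ, t, hadj, huniq⟩ := tree_exists_leaf G hG hN2
    have htℓ : t ≠ ℓ := fun h => G.irrefl (h ▸ hadj)
    have hG' : (G.comap (Function.Embedding.subtype fun u => u ≠ ℓ)).IsTree :=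
      tree_delete_leaf hG hadj huniq
    have hcV : Fintype.card {u : V // u ≠ ℓ} = N - 1 := by
      have : Fintype.card {u : V // u ≠ ℓ} = Fintype.card V - 1 := by
        simp [Fintype.card_subtype_compl]
      omega
    obtain ⟨ν, hν0, hν1, hνm, hνe⟩ := IH (N - 1) (by omega) {u : V // u ≠ ℓ}
      (G.comap (Function.Embedding.subtype fun u => u ≠ ℓ)) hcV hG'
      (fun i => p i.val) (fun i j => q i.val j.val)
      (fun i => hp i.val) (fun i j hij => hsymm _ _ (by simpa using hij))
      (fun i j hij => hq _ _ (by simpa using hij))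
    have hpt := hp t
    have hpl := hp ℓ
    have hqtl := hq t ℓ hadj.symm
    obtain ⟨k, hk0, hk1, hkj, hkm⟩ := kernel_exists (p t) (p ℓ) (q t ℓ) hpt.1 hpt.2
      hpl.1 hpl.2 hqtl.1 hqtl.2.1 hqtl.2.2.1 hqtl.2.2.2
    set tp : {u : V // u ≠ ℓ} := ⟨t, htℓ⟩ with htp
    -- the splitting equivalence
    have transfer : ∀ F : (V → Bool) → ℝ,
        ∑ x : V → Bool, F x
          = ∑ y : {u : V // u ≠ ℓ} → Bool, ∑ s : Bool,
              F ((Equiv.funSplitAt ℓ Bool).symm (s, y)) := by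
      intro F
      rw [← Equiv.sum_comp (Equiv.funSplitAt ℓ Bool).symm F, Fintype.sum_prod_type,
        Finset.sum_comm]
    have evalℓ : ∀ (s : Bool) (y : {u : V // u ≠ ℓ} → Bool),
        ((Equiv.funSplitAt ℓ Bool).symm (s, y)) ℓ = s := by
      intro s y
      simp [Equiv.funSplitAt_symm_apply]
    have evalne : ∀ (s : Bool) (y : {u : V // u ≠ ℓ} → Bool) (j : {u : V // u ≠ ℓ}),
        ((Equiv.funSplitAt ℓ Bool).symm (s, y)) j.val = y j := by
      intro s y j
      simp [Equiv.funSplitAt_symm_apply, j.2]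
    have evalres : ∀ (s : Bool) (y : {u : V // u ≠ ℓ} → Bool),
        (fun j : {u : V // u ≠ ℓ} => ((Equiv.funSplitAt ℓ Bool).symm (s, y)) j.val) = y :=
      fun s y => funext (evalne s y)
    have evalt : ∀ (s : Bool) (y : {u : V // u ≠ ℓ} → Bool),
        ((Equiv.funSplitAt ℓ Bool).symm (s, y)) t = y tp :=
      fun s y => evalne s y tp
    -- weighted splitting of ν-sums at tp
    have helper1 : ∀ g : Bool → ℝ,
        ∑ y : {u : V // u ≠ ℓ} → Bool, ν y * g (y tp)
          = p t * g true + (1 - p t) * g false := by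
      intro g
      have split : ∀ y : {u : V // u ≠ ℓ} → Bool,
          ν y * g (y tp) = (if y tp = true then ν y else 0) * g true
            + (ν y - (if y tp = true then ν y else 0)) * g false := by
        intro y
        cases hy : y tp <;> simp [hy] <;> ring
      rw [Finset.sum_congr rfl (fun y _ => split y), Finset.sum_add_distrib,
        ← Finset.sum_mul, ← Finset.sum_mul, Finset.sum_sub_distrib,
        ← Finset.sum_filter, hνm tp, hν1]
    refine ⟨fun x => ν (fun j : {u : V // u ≠ ℓ} => x j.val) * k (x t) (x ℓ), ?_, ?_, ?_, ?_⟩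
    · intro x
      exact mul_nonneg (hν0 _) (hk0 _ _)
    · rw [transfer]
      simp only [evalres, evalt, evalℓ]
      have inner : ∀ y : {u : V // u ≠ ℓ} → Bool,
          ∑ s : Bool, ν y * k (y tp) s = ν y := by
        intro y
        rw [Fintype.sum_bool, ← mul_add, hk1, mul_one]
      rw [Finset.sum_congr rfl fun y _ => inner y, hν1]
    · intro i
      rw [Finset.sum_filter, transfer]
      by_cases hi : i = ℓ
      · rw [show i = ℓ from hi]
        simp only [evalres, evalt, evalℓ]
        have inner : ∀ y : {u : V // u ≠ ℓ} → Bool,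
            (∑ s : Bool, if s = true then ν y * k (y tp) s else 0)
              = ν y * k (y tp) true := by
          intro y
          rw [Fintype.sum_bool]
          simp
        rw [Finset.sum_congr rfl fun y _ => inner y]
        have h1 := helper1 (fun s => k s true)
        try simp only at h1
        rw [h1, hkm]
      · have hcond : ∀ (s : Bool) (y : {u : V // u ≠ ℓ} → Bool),
            ((Equiv.funSplitAt ℓ Bool).symm (s, y)) i = y ⟨i, hi⟩ :=
          fun s y => evalne s y ⟨i, hi⟩
        simp only [evalres, evalt, evalℓ, hcond]
        have inner : ∀ y : {u : V // u ≠ ℓ} → Bool,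
            (∑ s : Bool, if y ⟨i, hi⟩ = true then ν y * k (y tp) s else 0)
              = (if y ⟨i, hi⟩ = true then ν y else 0) := by
          intro y
          rw [Fintype.sum_bool]
          by_cases hc : y ⟨i, hi⟩ = true
          · simp only [hc, if_true]
            rw [← mul_add, hk1, mul_one]
          · simp [hc]
        rw [Finset.sum_congr rfl fun y _ => inner y, ← Finset.sum_filter, hνm ⟨i, hi⟩]
    · intro i j hadjij
      rw [Finset.sum_filter, transfer]
      by_cases hi : i = ℓ
      · have hj : j = t := huniq j (hi ▸ hadjij)
        rw [show i = ℓ from hi, show j = t from hj]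
        simp only [evalres, evalt, evalℓ]
        have inner : ∀ y : {u : V // u ≠ ℓ} → Bool,
            (∑ s : Bool, if s = true ∧ y tp = true then ν y * k (y tp) s else 0)
              = ν y * (if y tp = true then k true true else 0) := by
          intro y
          rw [Fintype.sum_bool]
          cases hc : y tp <;> simp [hc]
        rw [Finset.sum_congr rfl fun y _ => inner y]
        have h1 : ∑ y : {u : V // u ≠ ℓ} → Bool, ν y * (if y tp = true then k true true else 0)
            = p t * k true true := by
          have := helper1 (fun s => if s = true then k true true else 0)
          simpa using this
        rw [h1, hkj]
        exact hsymm t ℓ hadj.symm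
      · by_cases hj : j = ℓ
        · have hi' : i = t := huniq i (by rw [hj] at hadjij; exact hadjij.symm)
          rw [show j = ℓ from hj, show i = t from hi']
          simp only [evalres, evalt, evalℓ]
          have inner : ∀ y : {u : V // u ≠ ℓ} → Bool,
              (∑ s : Bool, if y tp = true ∧ s = true then ν y * k (y tp) s else 0)
                = ν y * (if y tp = true then k true true else 0) := by
            intro y
            rw [Fintype.sum_bool]
            cases hc : y tp <;> simp [hc]
          rw [Finset.sum_congr rfl fun y _ => inner y]
          have h1 : ∑ y : {u : V // u ≠ ℓ} → Bool, ν y * (if y tp = true then k true true else 0)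
              = p t * k true true := by
            have := helper1 (fun s => if s = true then k true true else 0)
            simpa using this
          rw [h1, hkj]
        · have hadj' : (G.comap (Function.Embedding.subtype fun u => u ≠ ℓ)).Adj ⟨i, hi⟩ ⟨j, hj⟩ := by
            simpa using hadjij
          have hcondi : ∀ (s : Bool) (y : {u : V // u ≠ ℓ} → Bool),
              ((Equiv.funSplitAt ℓ Bool).symm (s, y)) i = y ⟨i, hi⟩ :=
            fun s y => evalne s y ⟨i, hi⟩
          have hcondj : ∀ (s : Bool) (y : {u : V // u ≠ ℓ} → Bool),
              ((Equiv.funSplitAt ℓ Bool).symm (s, y)) j = y ⟨j, hj⟩ :=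
            fun s y => evalne s y ⟨j, hj⟩
          simp only [evalres, evalt, evalℓ, hcondi, hcondj]
          have inner : ∀ y : {u : V // u ≠ ℓ} → Bool,
              (∑ s : Bool, if y ⟨i, hi⟩ = true ∧ y ⟨j, hj⟩ = true then ν y * k (y tp) s else 0)
                = (if y ⟨i, hi⟩ = true ∧ y ⟨j, hj⟩ = true then ν y else 0) := by
            intro y
            rw [Fintype.sum_bool]
            by_cases hc : y ⟨i, hi⟩ = true ∧ y ⟨j, hj⟩ = true
            · simp only [if_pos hc]
              rw [← mul_add, hk1, mul_one]
            · simp only [if_neg hc]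
              norm_num
          rw [Finset.sum_congr rfl fun y _ => inner y, ← Finset.sum_filter]
          exact hνe ⟨i, hi⟩ ⟨j, hj⟩ hadj'

end Main



/-- Tree graph representation: given a finite tree `G` on `{1,…,n}`,
single probabilities `p_i ∈ [0,1]` and, for each edge `{i,j}`, a joint value `p_{ij}`
satisfying `0 ≤ p_{ij} ≤ min(p_i, p_j)` and `p_i + p_j − p_{ij} ≤ 1`, there is a
probability measure on `{0,1}^n` with the prescribed singleton marginals and the
prescribed pairwise joints on the edges. -/
theorem tree_graph_representation (n : ℕ) (G : SimpleGraph (Fin n))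
    (hG : G.IsTree)
    (p : Fin n → ℝ) (q : Fin n → Fin n → ℝ)
    (hp : ∀ i, 0 ≤ p i ∧ p i ≤ 1)
    (hsymm : ∀ i j, G.Adj i j → q i j = q j i)
    (hq : ∀ i j, G.Adj i j →
      0 ≤ q i j ∧ q i j ≤ p i ∧ q i j ≤ p j ∧ p i + p j - q i j ≤ 1) :
    ∃ μ : (Fin n → Bool) → ℝ,
      (∀ x, 0 ≤ μ x) ∧
      (∑ x : Fin n → Bool, μ x) = 1 ∧
      (∀ i, (∑ x ∈ Finset.univ.filter (fun x : Fin n → Bool => x i = true), μ x) = p i) ∧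
      (∀ i j, G.Adj i j →
        (∑ x ∈ Finset.univ.filter
            (fun x : Fin n → Bool => x i = true ∧ x j = true), μ x) = q i j) := by
  exact tree_rep_aux (Fintype.card (Fin n)) (Fin n) G rfl hG p q hp hsymm hq
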